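/- Let μ₁, μ₂ ∈ ℝ and let σ₁, σ₂, σ₁₂ be positive reals with σ₁₂ < σ₁ + σ₂. For every t ∈ (0,1), the t-quantile of the normal distribution N(μ₁+μ₂, σ₁₂²) is strictly less than the sum of the t-quantiles of N(μ₁, σ₁²) and N(μ₂, σ₂²) if and only if t > 1/2. (This is the normal-demand case of the elliptical-family result: when jointly normal demands are pooled so that D₁+D₂ ~ N(μ₁+μ₂, σ₁₂²) with σ₁₂ < σ₁+σ₂, pooling leads to lower inventory if and only if the margin ratio exceeds 0.5.) -/

import Mathlib

open MeasureTheory ProbabilityTheory Set Filter Topology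

/-- The quantile function of a distribution on `ℝ`: `F⁻¹(t) = inf {x | t ≤ F(x)}`. -/
noncomputable def quantile (μ : Measure ℝ) (t : ℝ) : ℝ :=
  sInf {x : ℝ | t ≤ cdf μ x}

section aux

variable {t : ℝ}

lemma cdf_map_affine (ν : Measure ℝ) [IsProbabilityMeasure ν] {σ : ℝ} (hσ : 0 < σ) (μ x : ℝ) :
    cdf (ν.map (fun y => σ * y + μ)) x = cdf ν ((x - μ) / σ) := by
  have hmeas : Measurable (fun y : ℝ => σ * y + μ) := by fun_prop
  have : IsProbabilityMeasure (ν.map (fun y : ℝ => σ * y + μ)) :=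
    Measure.isProbabilityMeasure_map hmeas.aemeasurable
  rw [cdf_eq_real, cdf_eq_real, measureReal_def, measureReal_def, Measure.map_apply hmeas measurableSet_Iic]
  have hset : (fun y : ℝ => σ * y + μ) ⁻¹' Iic x = Iic ((x - μ) / σ) := by
    ext y
    simp only [mem_preimage, mem_Iic]
    rw [le_div_iff₀ hσ]
    constructor <;> intro h <;> linarith
  rw [hset]

lemma quantile_set_nonempty (ν : Measure ℝ) [IsProbabilityMeasure ν] (ht : t < 1) :
    {x : ℝ | t ≤ cdf ν x}.Nonempty :=
  ((tendsto_cdf_atTop ν).eventually (eventually_ge_nhds ht)).exists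

lemma quantile_set_bddBelow (ν : Measure ℝ) [IsProbabilityMeasure ν] (ht : 0 < t) :
    BddBelow {x : ℝ | t ≤ cdf ν x} := by
  obtain ⟨x₀, hx₀⟩ := ((tendsto_cdf_atBot ν).eventually (eventually_lt_nhds ht)).exists
  refine ⟨x₀, fun y hy => ?_⟩
  by_contra h
  push_neg at h
  exact absurd (hy.trans (monotone_cdf ν h.le)) (not_le.2 hx₀)

lemma quantile_map_affine (ν : Measure ℝ) [IsProbabilityMeasure ν] {σ : ℝ} (hσ : 0 < σ)
    (μ : ℝ) (ht : t ∈ Set.Ioo (0 : ℝ) 1) :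
    quantile (ν.map (fun y => σ * y + μ)) t = σ * quantile ν t + μ := by
  have hset : {x : ℝ | t ≤ cdf (ν.map (fun y => σ * y + μ)) x}
      = (fun y : ℝ => σ * y + μ) '' {x : ℝ | t ≤ cdf ν x} := by
    ext x
    simp only [mem_setOf_eq, mem_image, cdf_map_affine ν hσ μ]
    constructor
    · intro h
      exact ⟨(x - μ) / σ, h, by field_simp; ring⟩
    · rintro ⟨y, hy, rfl⟩
      have : (σ * y + μ - μ) / σ = y := by field_simp; ring
      rwa [this]
  unfold quantile
  rw [hset]
  have := ((OrderIso.mulLeft₀ σ hσ).trans (OrderIso.addRight μ)).map_csInf'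
    (quantile_set_nonempty ν ht.2) (quantile_set_bddBelow ν ht.1)
  simpa using this.symm

lemma gaussianReal_eq_map (μ : ℝ) (σ : NNReal) (hσ : 0 < σ) :
    gaussianReal μ (σ ^ 2) = (gaussianReal 0 1).map (fun y => (σ : ℝ) * y + μ) := by
  have hmul : Measurable (fun y : ℝ => (σ : ℝ) * y) := by fun_prop
  have hadd : Measurable (fun y : ℝ => y + μ) := by fun_prop
  have hcomp : (fun y : ℝ => (σ : ℝ) * y + μ) = (fun y => y + μ) ∘ (fun y => (σ : ℝ) * y) :=
    rfl
  rw [hcomp, ← Measure.map_map hadd hmul, gaussianReal_map_const_mul,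
    gaussianReal_map_add_const]
  congr 1
  · ring
  · ext
    push_cast
    ring

lemma cdf_stdGaussian_zero : cdf (gaussianReal 0 1) 0 = 1 / 2 := by
  set ν := gaussianReal 0 1 with hν
  have hmap : ν.map (fun y : ℝ => (-1 : ℝ) * y) = ν := by
    rw [hν, gaussianReal_map_const_mul]
    have h1 : (-1 : ℝ) * 0 = 0 := by norm_num
    have h2 : (⟨(-1 : ℝ) ^ 2, sq_nonneg _⟩ : NNReal) * 1 = 1 := by
      ext; norm_num
    rw [h1]; congr 1
  have hac : ν ≪ (volume : Measure ℝ) := gaussianReal_absolutelyContinuous _ one_ne_zero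
  have hzero : ν {(0 : ℝ)} = 0 := hac Real.volume_singleton
  have hIci : ν (Iic 0) = ν (Ici 0) := by
    conv_lhs => rw [← hmap]
    rw [Measure.map_apply (by fun_prop) measurableSet_Iic]
    congr 1
    ext y
    simp
  have hIoi : ν (Ici 0) = ν (Ioi 0) :=
    (measure_congr (Ioi_ae_eq_Ici' hzero)).symm
  have hcompl : ν (Ioi 0) = 1 - ν (Iic 0) := by
    rw [← compl_Iic]
    exact prob_compl_eq_one_sub measurableSet_Iic
  have hle : ν (Iic 0) ≤ 1 := prob_le_one
  have hkey : ν (Iic 0) = 1 - ν (Iic 0) := by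
    conv_lhs => rw [hIci, hIoi, hcompl]
  have hfin : ν (Iic 0) ≠ ⊤ := measure_ne_top _ _
  rw [cdf_eq_real, measureReal_def]
  have := congrArg ENNReal.toReal hkey
  rw [ENNReal.toReal_sub_of_le hle (by simp)] at this
  simp only [ENNReal.toReal_one] at this
  linarith

lemma quantile_std_pos_iff (ht : t ∈ Set.Ioo (0 : ℝ) 1) :
    0 < quantile (gaussianReal 0 1) t ↔ 1 / 2 < t := by
  set ν := gaussianReal 0 1 with hν
  constructor
  · intro h
    by_contra hc
    push_neg at hc
    have h0 : (0 : ℝ) ∈ {x : ℝ | t ≤ cdf ν x} := by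
      show t ≤ cdf ν 0
      rw [hν, cdf_stdGaussian_zero]
      exact hc
    have := csInf_le (quantile_set_bddBelow ν ht.1) h0
    exact absurd (lt_of_lt_of_le h this) (lt_irrefl 0)
  · intro h
    have hrc : ContinuousWithinAt (cdf ν) (Ici 0) 0 := (cdf ν).right_continuous 0
    have hrc' : ContinuousWithinAt (cdf ν) (Ioi 0) 0 :=
      hrc.mono Ioi_subset_Ici_self
    have hev : ∀ᶠ x in 𝓝[>] (0 : ℝ), cdf ν x < t := by
      apply hrc'.eventually_lt_const
      rw [cdf_stdGaussian_zero]; exact h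
    obtain ⟨δ, hδ, hδpos⟩ := (hev.and eventually_mem_nhdsWithin).exists
    have hδpos : (0 : ℝ) < δ := hδpos
    have hlb : δ ≤ quantile ν t := by
      apply le_csInf (quantile_set_nonempty ν ht.2)
      intro y hy
      by_contra hy'
      push_neg at hy'
      have : cdf ν y ≤ cdf ν δ := monotone_cdf ν hy'.le
      exact absurd (hy.trans this) (not_le.2 hδ)
    exact lt_of_lt_of_le hδpos hlb

end aux

theorem gaussian_pooling_iff_margin_gt_half (μ₁ μ₂ : ℝ) (σ₁ σ₂ σ₁₂ : NNReal)
    (h₁ : 0 < σ₁) (h₂ : 0 < σ₂) (h₁₂ : 0 < σ₁₂) (hlt : σ₁₂ < σ₁ + σ₂)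
    (t : ℝ) (ht : t ∈ Set.Ioo (0 : ℝ) 1) :
    quantile (gaussianReal (μ₁ + μ₂) (σ₁₂ ^ 2)) t <
        quantile (gaussianReal μ₁ (σ₁ ^ 2)) t + quantile (gaussianReal μ₂ (σ₂ ^ 2)) t
      ↔ 1 / 2 < t := by
  have hq1 := quantile_map_affine (gaussianReal 0 1) (σ := (σ₁ : ℝ)) (by exact_mod_cast h₁) μ₁ ht
  have hq2 := quantile_map_affine (gaussianReal 0 1) (σ := (σ₂ : ℝ)) (by exact_mod_cast h₂) μ₂ ht
  have hq12 := quantile_map_affine (gaussianReal 0 1) (σ := (σ₁₂ : ℝ)) (by exact_mod_cast h₁₂)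
    (μ₁ + μ₂) ht
  rw [gaussianReal_eq_map μ₁ σ₁ h₁, gaussianReal_eq_map μ₂ σ₂ h₂,
    gaussianReal_eq_map (μ₁ + μ₂) σ₁₂ h₁₂, hq1, hq2, hq12]
  set q := quantile (gaussianReal 0 1) t with hq
  rw [← quantile_std_pos_iff ht, ← hq]
  have hcoef : (0 : ℝ) < (σ₁ : ℝ) + σ₂ - σ₁₂ := by
    have : (σ₁₂ : ℝ) < (σ₁ : ℝ) + σ₂ := by exact_mod_cast hlt
    linarith
  constructor
  · intro hlt'
    nlinarith
  · intro hq0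
    nlinarith
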